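/- Let (X_n) be a sequence of square integrable real random variables with E[X_n X_k] = 0 for all n ≠ k (an orthogonal sequence). If ∑_{n=1}^∞ E[X_n^2] (log n)^2 / n^2 < ∞, then (1/n) ∑_{k=1}^n X_k converges to 0 almost surely. -/

import Mathlib

open MeasureTheory Filter Finset Topology

set_option maxHeartbeats 2000000


lemma RM_chain : ∀ (M : ℕ) (g b : ℕ → ℝ),
    (∀ j, j < M → ∀ i, |∑ k ∈ Finset.Ico (i * 2 ^ j) ((i + 1) * 2 ^ j), g k| ≤ b j) →
    ∀ r, r < 2 ^ M → |∑ k ∈ Finset.range r, g k| ≤ ∑ j ∈ Finset.range M, b j := by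
  intro M
  induction M with
  | zero =>
      intro g b _ r hr
      interval_cases r
      simp
  | succ M ih =>
      intro g b hb r hr
      have hbM : 0 ≤ b M := le_trans (abs_nonneg _) (hb M (Nat.lt_succ_self M) 0)
      rcases lt_or_ge r (2 ^ M) with h | h
      · have h1 := ih g b (fun j hj i => hb j (hj.trans (Nat.lt_succ_self M)) i) r h
        rw [Finset.sum_range_succ]
        linarith
      · have hsplit : ∑ k ∈ Finset.range r, g k
            = (∑ k ∈ Finset.range (2 ^ M), g k) + ∑ k ∈ Finset.Ico (2 ^ M) r, g k := by
          rw [Finset.range_eq_Ico, Finset.range_eq_Ico]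
          exact (Finset.sum_Ico_consecutive _ (Nat.zero_le _) h).symm
        have hfirst : |∑ k ∈ Finset.range (2 ^ M), g k| ≤ b M := by
          have h0 := hb M (Nat.lt_succ_self M) 0
          rw [Finset.range_eq_Ico]
          simpa using h0
        have hsecond : |∑ k ∈ Finset.Ico (2 ^ M) r, g k| ≤ ∑ j ∈ Finset.range M, b j := by
          have hb' : ∀ j, j < M → ∀ i,
              |∑ k ∈ Finset.Ico (i * 2 ^ j) ((i + 1) * 2 ^ j), g (2 ^ M + k)| ≤ b j := by
            intro j hj i
            have hpow : 2 ^ (M - j) * 2 ^ j = 2 ^ M := by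
              rw [← pow_add]; congr 1; omega
            have key : ∑ k ∈ Finset.Ico (i * 2 ^ j) ((i + 1) * 2 ^ j), g (2 ^ M + k)
                = ∑ k ∈ Finset.Ico ((i + 2 ^ (M - j)) * 2 ^ j)
                    ((i + 2 ^ (M - j) + 1) * 2 ^ j), g k := by
              rw [Finset.sum_Ico_eq_sum_range, Finset.sum_Ico_eq_sum_range]
              have len : ∀ a : ℕ, (a + 1) * 2 ^ j - a * 2 ^ j = 2 ^ j := fun a => by
                rw [add_mul, one_mul, Nat.add_sub_cancel_left]
              rw [len, len]
              refine Finset.sum_congr rfl fun t _ => ?_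
              congr 1
              rw [add_mul, hpow]
              ring
            rw [key]
            exact hb j (hj.trans (Nat.lt_succ_self M)) (i + 2 ^ (M - j))
          have hrlt : r - 2 ^ M < 2 ^ M := by
            have h2 : (2:ℕ) ^ (M + 1) = 2 ^ M * 2 := pow_succ 2 M
            omega
          have h1 := ih (fun k => g (2 ^ M + k)) b hb' (r - 2 ^ M) hrlt
          rwa [Finset.sum_Ico_eq_sum_range]
        rw [hsplit, Finset.sum_range_succ]
        calc |(∑ k ∈ Finset.range (2 ^ M), g k) + ∑ k ∈ Finset.Ico (2 ^ M) r, g k|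
            ≤ |∑ k ∈ Finset.range (2 ^ M), g k| + |∑ k ∈ Finset.Ico (2 ^ M) r, g k| :=
              abs_add_le _ _
          _ ≤ _ := by linarith

lemma RM_sum_blocks (f : ℕ → ℝ) (a c : ℕ) :
    ∀ N, ∑ i ∈ Finset.range N, ∑ k ∈ Finset.Ico (a + i * c) (a + (i + 1) * c), f k
      = ∑ k ∈ Finset.Ico a (a + N * c), f k := by
  intro N
  induction N with
  | zero => simp
  | succ N ih =>
      have h1 : a ≤ a + N * c := Nat.le_add_right _ _
      have h2 : a + N * c ≤ a + (N + 1) * c := by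
        have : N * c ≤ (N + 1) * c := Nat.mul_le_mul_right c (Nat.le_succ N)
        omega
      rw [Finset.sum_range_succ, ih]
      exact Finset.sum_Ico_consecutive f h1 h2

lemma RM_blocks (f : ℕ → ℝ) : ∀ M, ∑ m ∈ Finset.range M,
    ∑ k ∈ Finset.Ico (2 ^ m) (2 ^ (m + 1)), f k = ∑ k ∈ Finset.Ico 1 (2 ^ M), f k := by
  intro M
  induction M with
  | zero => simp
  | succ M ih =>
      rw [Finset.sum_range_succ, ih]
      exact Finset.sum_Ico_consecutive f Nat.one_le_two_pow
        (Nat.pow_le_pow_right (by norm_num) (Nat.le_succ M))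

noncomputable def RMQ (f : ℕ → ℝ) (m j : ℕ) : ℝ :=
  ∑ i ∈ Finset.range (2 ^ (m - j)),
    (∑ k ∈ Finset.Ico (2 ^ m + i * 2 ^ j) (2 ^ m + (i + 1) * 2 ^ j), f k) ^ 2

noncomputable def RMW (f : ℕ → ℝ) (m : ℕ) : ℝ :=
  ((m : ℝ) + 1) * (∑ j ∈ Finset.range (m + 1), RMQ f m j) / 4 ^ m

lemma RMQ_nonneg (f : ℕ → ℝ) (m j : ℕ) : 0 ≤ RMQ f m j :=
  Finset.sum_nonneg fun _ _ => sq_nonneg _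

lemma RMW_nonneg (f : ℕ → ℝ) (m : ℕ) : 0 ≤ RMW f m := by
  apply div_nonneg _ (by positivity)
  exact mul_nonneg (by positivity) (Finset.sum_nonneg fun j _ => RMQ_nonneg f m j)

lemma RM_four_pow (m : ℕ) : ((4:ℝ)) ^ m = ((2:ℝ) ^ m) ^ 2 := by
  rw [← pow_mul, mul_comm, pow_mul]
  norm_num

lemma RM_block_bound (f : ℕ → ℝ) (m n : ℕ) (hn1 : 2 ^ m ≤ n) (hn2 : n ≤ 2 ^ (m + 1)) :
    |∑ k ∈ Finset.Ico (2 ^ m) n, f k| ≤ 2 ^ m * Real.sqrt (RMW f m) := by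
  have hb : ∀ j, j < m + 1 → ∀ i,
      |∑ k ∈ Finset.Ico (i * 2 ^ j) ((i + 1) * 2 ^ j),
        (fun k => if k < 2 ^ m then f (2 ^ m + k) else 0) k| ≤ Real.sqrt (RMQ f m j) := by
    intro j hj i
    have hjm : j ≤ m := Nat.lt_succ_iff.mp hj
    have hpow : 2 ^ (m - j) * 2 ^ j = 2 ^ m := by rw [← pow_add]; congr 1; omega
    rcases lt_or_ge i (2 ^ (m - j)) with hi | hi
    · have hub : (i + 1) * 2 ^ j ≤ 2 ^ m := by
        calc (i + 1) * 2 ^ j ≤ 2 ^ (m - j) * 2 ^ j := Nat.mul_le_mul_right _ hi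
          _ = 2 ^ m := hpow
      have e1 : ∑ k ∈ Finset.Ico (i * 2 ^ j) ((i + 1) * 2 ^ j),
            (if k < 2 ^ m then f (2 ^ m + k) else 0)
          = ∑ k ∈ Finset.Ico (2 ^ m + i * 2 ^ j) (2 ^ m + (i + 1) * 2 ^ j), f k := by
        rw [Finset.sum_Ico_eq_sum_range, Finset.sum_Ico_eq_sum_range]
        have len1 : (i + 1) * 2 ^ j - i * 2 ^ j = 2 ^ j := by
          rw [add_mul, one_mul, Nat.add_sub_cancel_left]
        have len2 : 2 ^ m + (i + 1) * 2 ^ j - (2 ^ m + i * 2 ^ j) = 2 ^ j := by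
          rw [add_mul, one_mul, ← Nat.add_assoc, Nat.add_sub_cancel_left]
        rw [len1, len2]
        refine Finset.sum_congr rfl fun t ht => ?_
        have htlt : t < 2 ^ j := Finset.mem_range.mp ht
        have hklt : i * 2 ^ j + t < 2 ^ m := by
          have h5 : i * 2 ^ j + t < (i + 1) * 2 ^ j := by
            rw [add_mul, one_mul]; omega
          omega
        rw [if_pos hklt]
        congr 1
        ring
      rw [e1]
      have hle : (∑ k ∈ Finset.Ico (2 ^ m + i * 2 ^ j) (2 ^ m + (i + 1) * 2 ^ j), f k) ^ 2
          ≤ RMQ f m j := by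
        rw [RMQ]
        exact Finset.single_le_sum (f := fun i =>
          (∑ k ∈ Finset.Ico (2 ^ m + i * 2 ^ j) (2 ^ m + (i + 1) * 2 ^ j), f k) ^ 2)
          (fun i _ => sq_nonneg _) (Finset.mem_range.mpr hi)
      calc |∑ k ∈ Finset.Ico (2 ^ m + i * 2 ^ j) (2 ^ m + (i + 1) * 2 ^ j), f k|
          = Real.sqrt ((∑ k ∈ Finset.Ico (2 ^ m + i * 2 ^ j) (2 ^ m + (i + 1) * 2 ^ j), f k) ^ 2) :=
            (Real.sqrt_sq_eq_abs _).symm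
        _ ≤ Real.sqrt (RMQ f m j) := Real.sqrt_le_sqrt hle
    · have hz : ∑ k ∈ Finset.Ico (i * 2 ^ j) ((i + 1) * 2 ^ j),
          (if k < 2 ^ m then f (2 ^ m + k) else 0) = 0 := by
        apply Finset.sum_eq_zero
        intro k hk
        have hk1 : i * 2 ^ j ≤ k := (Finset.mem_Ico.mp hk).1
        have hge : 2 ^ m ≤ k := by
          have h6 : 2 ^ m ≤ i * 2 ^ j := by
            calc 2 ^ m = 2 ^ (m - j) * 2 ^ j := hpow.symm
              _ ≤ i * 2 ^ j := Nat.mul_le_mul_right _ hi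
          omega
        rw [if_neg (by omega)]
      rw [hz]
      simpa using Real.sqrt_nonneg (RMQ f m j)
  have h2succ : (2:ℕ) ^ (m + 1) = 2 ^ m * 2 := pow_succ 2 m
  have hposm : 0 < 2 ^ m := Nat.two_pow_pos m
  have hr : n - 2 ^ m < 2 ^ (m + 1) := by omega
  have hchain := RM_chain (m + 1) _ _ hb (n - 2 ^ m) hr
  have e2 : ∑ k ∈ Finset.range (n - 2 ^ m),
        (fun k => if k < 2 ^ m then f (2 ^ m + k) else 0) k
      = ∑ k ∈ Finset.Ico (2 ^ m) n, f k := by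
    rw [Finset.sum_Ico_eq_sum_range]
    refine Finset.sum_congr rfl fun t ht => ?_
    have h7 : t < 2 ^ m := by
      have := Finset.mem_range.mp ht
      omega
    simp only [if_pos h7]
  rw [← e2]
  refine le_trans hchain ?_
  have cs := Real.sum_sqrt_mul_sqrt_le (Finset.range (m + 1)) (f := fun j => RMQ f m j)
    (g := fun _ => (1:ℝ)) (RMQ_nonneg f m) (fun _ => zero_le_one)
  simp only [Real.sqrt_one, mul_one, Finset.sum_const, Finset.card_range, nsmul_eq_mul] at cs
  have e3 : Real.sqrt (((m:ℝ) + 1) * 1) = Real.sqrt ((m:ℝ) + 1) := by norm_num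
  have e4 : Real.sqrt (∑ j ∈ Finset.range (m + 1), RMQ f m j) * Real.sqrt ((m + 1 : ℕ) : ℝ)
      = 2 ^ m * Real.sqrt (RMW f m) := by
    rw [← Real.sqrt_mul (Finset.sum_nonneg fun j _ => RMQ_nonneg f m j)]
    have e5 : (∑ j ∈ Finset.range (m + 1), RMQ f m j) * ((m + 1 : ℕ) : ℝ)
        = ((2:ℝ) ^ m) ^ 2 * RMW f m := by
      rw [RMW, RM_four_pow]
      push_cast
      field_simp
    rw [e5, Real.sqrt_mul (by positivity), Real.sqrt_sq (by positivity)]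
  calc ∑ j ∈ Finset.range (m + 1), Real.sqrt (RMQ f m j)
      ≤ Real.sqrt (∑ j ∈ Finset.range (m + 1), RMQ f m j) * Real.sqrt ((m + 1 : ℕ) : ℝ) := by
        exact_mod_cast cs
    _ = 2 ^ m * Real.sqrt (RMW f m) := e4

lemma RM_cesaro (u : ℕ → ℝ) (hu0 : ∀ l, 0 ≤ u l) (hu : Tendsto u atTop (𝓝 0)) :
    Tendsto (fun m : ℕ => (∑ l ∈ Finset.range (m + 1), 2 ^ l * u l) / 2 ^ m) atTop (𝓝 0) := by
  rw [Metric.tendsto_atTop]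
  intro ε hε
  rw [Metric.tendsto_atTop] at hu
  obtain ⟨L, hL⟩ := hu (ε / 4) (by linarith)
  have hL' : ∀ l, L ≤ l → u l ≤ ε / 4 := by
    intro l hl
    have := hL l hl
    rw [Real.dist_eq, sub_zero] at this
    exact le_of_lt (lt_of_abs_lt this)
  set C := ∑ l ∈ Finset.range L, (2:ℝ) ^ l * u l with hC
  have hCtend : Tendsto (fun m : ℕ => C / 2 ^ m) atTop (𝓝 0) :=
    Tendsto.div_atTop tendsto_const_nhds (tendsto_pow_atTop_atTop_of_one_lt one_lt_two)
  rw [Metric.tendsto_atTop] at hCtend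
  obtain ⟨M, hM⟩ := hCtend (ε / 4) (by linarith)
  refine ⟨max L M, fun m hm => ?_⟩
  have hmL : L ≤ m := le_trans (le_max_left _ _) hm
  have hmM : M ≤ m := le_trans (le_max_right _ _) hm
  have hpos : (0:ℝ) < 2 ^ m := by positivity
  have hsplit : ∑ l ∈ Finset.range (m + 1), (2:ℝ) ^ l * u l
      = C + ∑ l ∈ Finset.Ico L (m + 1), (2:ℝ) ^ l * u l := by
    rw [hC, Finset.range_eq_Ico, Finset.range_eq_Ico]
    exact (Finset.sum_Ico_consecutive _ (Nat.zero_le _) (by omega)).symm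
  have htail : ∑ l ∈ Finset.Ico L (m + 1), (2:ℝ) ^ l * u l
      ≤ (ε / 4) * 2 ^ (m + 1) := by
    calc ∑ l ∈ Finset.Ico L (m + 1), (2:ℝ) ^ l * u l
        ≤ ∑ l ∈ Finset.Ico L (m + 1), (2:ℝ) ^ l * (ε / 4) := by
          refine Finset.sum_le_sum fun l hl => ?_
          have := hL' l (Finset.mem_Ico.mp hl).1
          exact mul_le_mul_of_nonneg_left this (by positivity)
      _ ≤ ∑ l ∈ Finset.range (m + 1), (2:ℝ) ^ l * (ε / 4) := by
          refine Finset.sum_le_sum_of_subset_of_nonneg ?_ (fun l _ _ => by positivity)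
          rw [Finset.range_eq_Ico]
          exact Finset.Ico_subset_Ico (Nat.zero_le _) le_rfl
      _ = (∑ l ∈ Finset.range (m + 1), (2:ℝ) ^ l) * (ε / 4) := by
          rw [← Finset.sum_mul]
      _ ≤ 2 ^ (m + 1) * (ε / 4) := by
          have hg : ∑ l ∈ Finset.range (m + 1), (2:ℝ) ^ l = 2 ^ (m + 1) - 1 := by
            have := geom_sum_eq (by norm_num : (2:ℝ) ≠ 1) (m + 1)
            rw [this]; norm_num
          rw [hg]
          nlinarith [hε]
      _ = (ε / 4) * 2 ^ (m + 1) := by ring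
  have hnn : 0 ≤ ∑ l ∈ Finset.range (m + 1), (2:ℝ) ^ l * u l :=
    Finset.sum_nonneg fun l _ => mul_nonneg (by positivity) (hu0 l)
  rw [Real.dist_eq, sub_zero, abs_of_nonneg (div_nonneg hnn hpos.le)]
  have hC0 : 0 ≤ C := Finset.sum_nonneg fun l _ => mul_nonneg (by positivity) (hu0 l)
  have hCb : C / 2 ^ m < ε / 4 := by
    have h8 := hM m hmM
    rwa [Real.dist_eq, sub_zero, abs_of_nonneg (div_nonneg hC0 hpos.le)] at h8
  have htail2 : (∑ l ∈ Finset.Ico L (m + 1), (2:ℝ) ^ l * u l) / 2 ^ m ≤ ε / 2 := by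
    rw [div_le_iff₀ hpos]
    calc ∑ l ∈ Finset.Ico L (m + 1), (2:ℝ) ^ l * u l ≤ (ε / 4) * 2 ^ (m + 1) := htail
      _ = ε / 2 * 2 ^ m := by rw [pow_succ]; ring
  rw [hsplit, add_div]
  linarith

lemma RM_integrable_mul {Ω : Type*} [MeasureSpace Ω] {f g : Ω → ℝ}
    (hf : MemLp f 2 (volume : Measure Ω)) (hg : MemLp g 2 (volume : Measure Ω)) :
    Integrable (fun ω => f ω * g ω) (volume : Measure Ω) := by
  refine Integrable.mono' (hf.integrable_sq.add hg.integrable_sq)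
    (hf.aestronglyMeasurable.mul hg.aestronglyMeasurable)
    (Filter.Eventually.of_forall fun ω => ?_)
  simp only [Pi.add_apply]
  rw [Real.norm_eq_abs]
  nlinarith [sq_nonneg (|f ω| - |g ω|), sq_abs (f ω), sq_abs (g ω), abs_nonneg (f ω),
    abs_nonneg (g ω), abs_mul (f ω) (g ω), abs_nonneg (f ω * g ω)]

lemma RM_int_sq_sum {Ω : Type*} [MeasureSpace Ω] (Y : ℕ → Ω → ℝ)
    (hY : ∀ n, MemLp (Y n) 2 (volume : Measure Ω))
    (ho : ∀ n k, n ≠ k → ∫ ω, Y n ω * Y k ω = 0) (s : Finset ℕ) :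
    ∫ ω, (∑ k ∈ s, Y k ω) ^ 2 = ∑ k ∈ s, ∫ ω, (Y k ω) ^ 2 := by
  have expand : ∀ ω : Ω, (∑ k ∈ s, Y k ω) ^ 2 = ∑ k ∈ s, ∑ l ∈ s, Y k ω * Y l ω := by
    intro ω
    rw [sq, Finset.sum_mul_sum]
  simp_rw [expand]
  rw [integral_finset_sum _ (fun k _ =>
    integrable_finset_sum _ (fun l _ => RM_integrable_mul (hY k) (hY l)))]
  refine Finset.sum_congr rfl fun k hk => ?_
  rw [integral_finset_sum _ (fun l _ => RM_integrable_mul (hY k) (hY l)),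
    Finset.sum_eq_single k]
  · congr 1; funext ω; rw [sq]
  · intro l _ hlk
    exact ho k l (fun h => hlk h.symm)
  · intro hk'
    exact absurd hk hk'

lemma RM_ae_summable {Ω : Type*} [MeasureSpace Ω] (W : ℕ → Ω → ℝ)
    (hnn : ∀ m ω, 0 ≤ W m ω) (hint : ∀ m, Integrable (W m) (volume : Measure Ω))
    (hs : Summable fun m => ∫ ω, W m ω) :
    ∀ᵐ ω ∂(volume : Measure Ω), Summable fun m => W m ω := by
  have hmeas : ∀ m, AEMeasurable (fun ω => ENNReal.ofReal (W m ω)) (volume : Measure Ω) :=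
    fun m => (hint m).aestronglyMeasurable.aemeasurable.ennreal_ofReal
  have h1 : ∀ m, ∫⁻ ω, ENNReal.ofReal (W m ω) = ENNReal.ofReal (∫ ω, W m ω) := fun m =>
    (MeasureTheory.ofReal_integral_eq_lintegral_ofReal (hint m)
      (Filter.Eventually.of_forall (hnn m))).symm
  have h2 : ∫⁻ ω, ∑' m, ENNReal.ofReal (W m ω) ≠ ⊤ := by
    rw [lintegral_tsum hmeas]
    have h3 : ∑' m, ∫⁻ ω, ENNReal.ofReal (W m ω) = ENNReal.ofReal (∑' m, ∫ ω, W m ω) := by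
      rw [ENNReal.ofReal_tsum_of_nonneg (fun m => integral_nonneg (hnn m)) hs]
      exact tsum_congr h1
    rw [h3]
    exact ENNReal.ofReal_ne_top
  have h3 := ae_lt_top' (AEMeasurable.ennreal_tsum hmeas) h2
  filter_upwards [h3] with ω hω
  have hω' : ∑' m, ENNReal.ofReal (W m ω) ≠ ⊤ := hω.ne
  have h4 : Summable fun m => (W m ω).toNNReal := by
    rw [← ENNReal.tsum_coe_ne_top_iff_summable]
    simpa [ENNReal.ofReal] using hω'
  have h5 := NNReal.summable_coe.mpr h4
  exact h5.congr fun m => Real.coe_toNNReal _ (hnn m ω)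

lemma RM_key (σ : ℝ) (hσ : 0 ≤ σ) (m k : ℕ) (h1 : 2 ^ m ≤ k) (h2 : k < 2 ^ (m + 1)) :
    ((m:ℝ) + 1) ^ 2 * σ / 4 ^ m
      ≤ (16 / Real.log 2 ^ 2) * (σ * Real.log ((k:ℝ) + 1) ^ 2 / ((k:ℝ) + 1) ^ 2) := by
  have hl2 : (0:ℝ) < Real.log 2 := Real.log_pos one_lt_two
  rcases Nat.eq_zero_or_pos m with hm | hm
  · subst hm
    have hk : k = 1 := by
      have := h2; simp at this ⊢; omega
    subst hk
    have e : (16 / Real.log 2 ^ 2) * (σ * Real.log ((1:ℝ) + 1) ^ 2 / ((1:ℝ) + 1) ^ 2)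
        = 4 * σ := by
      norm_num
      field_simp
      ring
    push_cast
    rw [e]
    norm_num
    linarith
  · have hmR : (1:ℝ) ≤ (m:ℝ) := by exact_mod_cast hm
    have hkR : ((2:ℝ)) ^ m ≤ (k:ℝ) := by exact_mod_cast h1
    have hk1 : ((2:ℝ)) ^ m ≤ (k:ℝ) + 1 := by linarith
    have hub : ((k:ℝ)) + 1 ≤ 2 ^ (m + 1) := by
      have h3 : k + 1 ≤ 2 ^ (m + 1) := h2
      exact_mod_cast h3
    have hlb : (m:ℝ) * Real.log 2 ≤ Real.log ((k:ℝ) + 1) := by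
      rw [← Real.log_pow]
      exact Real.log_le_log (by positivity) hk1
    have hL0 : 0 ≤ Real.log ((k:ℝ) + 1) := le_trans (by positivity) hlb
    have h3 : ((m:ℝ) + 1) ^ 2 ≤ 4 * (m:ℝ) ^ 2 := by nlinarith
    have hA : ((k:ℝ) + 1) ^ 2 ≤ 4 * 4 ^ m := by
      have h4 : ((k:ℝ) + 1) ^ 2 ≤ ((2:ℝ) ^ (m + 1)) ^ 2 :=
        pow_le_pow_left₀ (by positivity) hub 2
      calc ((k:ℝ) + 1) ^ 2 ≤ ((2:ℝ) ^ (m + 1)) ^ 2 := h4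
        _ = 4 * 4 ^ m := by rw [← RM_four_pow (m + 1), pow_succ]; ring
    have h2' : (m:ℝ) ^ 2 * Real.log 2 ^ 2 ≤ Real.log ((k:ℝ) + 1) ^ 2 := by
      have h5 := pow_le_pow_left₀ (by positivity : (0:ℝ) ≤ (m:ℝ) * Real.log 2) hlb 2
      nlinarith [h5]
    have h4m : (0:ℝ) < 4 ^ m := by positivity
    have hc : ((m:ℝ) + 1) ^ 2 / 4 ^ m
        ≤ (16 / Real.log 2 ^ 2) * (Real.log ((k:ℝ) + 1) ^ 2 / ((k:ℝ) + 1) ^ 2) := by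
      have eR : (16 / Real.log 2 ^ 2) * (Real.log ((k:ℝ) + 1) ^ 2 / ((k:ℝ) + 1) ^ 2)
          = 16 * Real.log ((k:ℝ) + 1) ^ 2 / (Real.log 2 ^ 2 * ((k:ℝ) + 1) ^ 2) := by
        rw [div_mul_div_comm]
      rw [eR, div_le_div_iff₀ h4m (by positivity)]
      have s1 : ((m:ℝ) + 1) ^ 2 * ((k:ℝ) + 1) ^ 2 ≤ 4 * (m:ℝ) ^ 2 * (4 * 4 ^ m) :=
        mul_le_mul h3 hA (by positivity) (by positivity)
      have s2 : (m:ℝ) ^ 2 * Real.log 2 ^ 2 * 4 ^ m ≤ Real.log ((k:ℝ) + 1) ^ 2 * 4 ^ m :=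
        mul_le_mul_of_nonneg_right h2' h4m.le
      nlinarith [mul_le_mul_of_nonneg_right s1 (sq_nonneg (Real.log 2)), s2]
    calc ((m:ℝ) + 1) ^ 2 * σ / 4 ^ m = σ * (((m:ℝ) + 1) ^ 2 / 4 ^ m) := by ring
      _ ≤ σ * ((16 / Real.log 2 ^ 2) * (Real.log ((k:ℝ) + 1) ^ 2 / ((k:ℝ) + 1) ^ 2)) :=
          mul_le_mul_of_nonneg_left hc hσ
      _ = (16 / Real.log 2 ^ 2) * (σ * Real.log ((k:ℝ) + 1) ^ 2 / ((k:ℝ) + 1) ^ 2) := by ring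

/-- Rademacher-Menchov for orthogonal sequences with `aₙ = 1/n`, combined with
Kronecker's lemma: `(1/n) ∑_{k=1}^n X_k → 0` almost surely. -/
theorem rademacher_menchov_orthogonal_sln
    {Ω : Type*} [MeasureSpace Ω] [IsProbabilityMeasure (volume : Measure Ω)]
    (X : ℕ → Ω → ℝ)
    (hL2 : ∀ n, MemLp (X n) 2 (volume : Measure Ω))
    (horth : ∀ n k, n ≠ k → ∫ ω, X n ω * X k ω = 0)
    (hsum : Summable (fun n : ℕ => (∫ ω, (X n ω) ^ 2) * (Real.log n) ^ 2 / (n : ℝ) ^ 2)) :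
    ∀ᵐ ω ∂(volume : Measure Ω),
      Tendsto (fun n : ℕ => (n : ℝ)⁻¹ * ∑ k ∈ Finset.Icc 1 n, X k ω) atTop (𝓝 0) := by
  have hY2 : ∀ k : ℕ, MemLp (fun ω => X (k + 1) ω) 2 (volume : Measure Ω) := fun k => hL2 (k + 1)
  have hTmem : ∀ a b : ℕ, MemLp (fun ω => ∑ k ∈ Finset.Ico a b, X (k + 1) ω) 2
      (volume : Measure Ω) := fun a b => memLp_finset_sum _ (fun k _ => hY2 k)
  have hWint : ∀ m : ℕ, Integrable (fun ω => RMW (fun k => X (k + 1) ω) m)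
      (volume : Measure Ω) := by
    intro m
    have h1 : Integrable (fun ω => ∑ j ∈ Finset.range (m + 1), RMQ (fun k => X (k + 1) ω) m j)
        (volume : Measure Ω) := by
      refine integrable_finset_sum _ (fun j _ => ?_)
      simp only [RMQ]
      exact integrable_finset_sum _ (fun i _ => (hTmem _ _).integrable_sq)
    simp only [RMW]
    exact (h1.const_mul _).div_const _
  have htW : Summable (fun m : ℕ => ∫ ω, RMW (fun k => X (k + 1) ω) m) := by
    have hY2 : ∀ k : ℕ, MemLp (fun ω => X (k + 1) ω) 2 (volume : Measure Ω) := fun k => hL2 (k + 1)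
    have hTmem : ∀ a b : ℕ, MemLp (fun ω => ∑ k ∈ Finset.Ico a b, X (k + 1) ω) 2
        (volume : Measure Ω) := fun a b => memLp_finset_sum _ (fun k _ => hY2 k)
    have hT : ∀ a b : ℕ, ∫ ω, (∑ k ∈ Finset.Ico a b, X (k + 1) ω) ^ 2
        = ∑ k ∈ Finset.Ico a b, ∫ ω, (X (k + 1) ω) ^ 2 := fun a b =>
      RM_int_sq_sum (fun k => X (k + 1)) hY2
        (fun n k hnk => horth (n + 1) (k + 1) (by omega)) _
    have σnn : ∀ k : ℕ, 0 ≤ ∫ ω, (X (k + 1) ω) ^ 2 :=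
      fun k => integral_nonneg (fun ω => sq_nonneg _)
    have hWval : ∀ m : ℕ, ∫ ω, RMW (fun k => X (k + 1) ω) m
        = ((m:ℝ) + 1) ^ 2 * (∑ k ∈ Finset.Ico (2 ^ m) (2 ^ (m + 1)), ∫ ω, (X (k + 1) ω) ^ 2)
          / 4 ^ m := by
      intro m
      have e1 : ∀ j, j ≤ m →
          (∫ ω, ∑ i ∈ Finset.range (2 ^ (m - j)),
            (∑ k ∈ Finset.Ico (2 ^ m + i * 2 ^ j) (2 ^ m + (i + 1) * 2 ^ j), X (k + 1) ω) ^ 2)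
          = ∑ k ∈ Finset.Ico (2 ^ m) (2 ^ (m + 1)), ∫ ω, (X (k + 1) ω) ^ 2 := by
        intro j hj
        rw [integral_finset_sum _ (fun i _ => (hTmem _ _).integrable_sq)]
        have e2 : 2 ^ m + 2 ^ (m - j) * 2 ^ j = 2 ^ (m + 1) := by
          have h5 : 2 ^ (m - j) * 2 ^ j = 2 ^ m := by rw [← pow_add]; congr 1; omega
          have h6 : (2:ℕ) ^ (m + 1) = 2 ^ m * 2 := pow_succ 2 m
          omega
        calc ∑ i ∈ Finset.range (2 ^ (m - j)),
              ∫ ω, (∑ k ∈ Finset.Ico (2 ^ m + i * 2 ^ j) (2 ^ m + (i + 1) * 2 ^ j), X (k + 1) ω) ^ 2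
            = ∑ i ∈ Finset.range (2 ^ (m - j)),
              ∑ k ∈ Finset.Ico (2 ^ m + i * 2 ^ j) (2 ^ m + (i + 1) * 2 ^ j),
                ∫ ω, (X (k + 1) ω) ^ 2 := Finset.sum_congr rfl fun i _ => hT _ _
          _ = ∑ k ∈ Finset.Ico (2 ^ m) (2 ^ m + 2 ^ (m - j) * 2 ^ j), ∫ ω, (X (k + 1) ω) ^ 2 :=
              RM_sum_blocks _ (2 ^ m) (2 ^ j) (2 ^ (m - j))
          _ = ∑ k ∈ Finset.Ico (2 ^ m) (2 ^ (m + 1)), ∫ ω, (X (k + 1) ω) ^ 2 := by rw [e2]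
      simp only [RMW, RMQ]
      rw [integral_div, integral_const_mul,
        integral_finset_sum _ (fun j _ => integrable_finset_sum _
          (fun i _ => (hTmem _ _).integrable_sq)),
        Finset.sum_congr rfl (fun j hj => e1 j (Nat.lt_succ_iff.mp (Finset.mem_range.mp hj))),
        Finset.sum_const, Finset.card_range, nsmul_eq_mul]
      push_cast
      ring
    -- summability
    have hsum1 : Summable (fun k : ℕ =>
        (∫ ω, (X (k + 1) ω) ^ 2) * (Real.log (k + 1 : ℕ)) ^ 2 / ((k + 1 : ℕ) : ℝ) ^ 2) :=
      (summable_nat_add_iff 1).mpr hsum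
    have hknn : ∀ k : ℕ, 0 ≤ (∫ ω, (X (k + 1) ω) ^ 2) * (Real.log (k + 1 : ℕ)) ^ 2
        / ((k + 1 : ℕ) : ℝ) ^ 2 := fun k => by
      apply div_nonneg (mul_nonneg (σnn k) (sq_nonneg _)) (by positivity)
    apply summable_of_sum_range_le
      (c := (16 / Real.log 2 ^ 2) * ∑' k : ℕ,
        (∫ ω, (X (k + 1) ω) ^ 2) * (Real.log (k + 1 : ℕ)) ^ 2 / ((k + 1 : ℕ) : ℝ) ^ 2)
    · intro m
      rw [hWval m]
      exact div_nonneg (mul_nonneg (sq_nonneg _) (Finset.sum_nonneg fun k _ => σnn k))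
        (by positivity)
    · intro M
      calc ∑ m ∈ Finset.range M, ∫ ω, RMW (fun k => X (k + 1) ω) m
          = ∑ m ∈ Finset.range M, ∑ k ∈ Finset.Ico (2 ^ m) (2 ^ (m + 1)),
              ((m:ℝ) + 1) ^ 2 * (∫ ω, (X (k + 1) ω) ^ 2) / 4 ^ m := by
            refine Finset.sum_congr rfl fun m _ => ?_
            rw [hWval m, Finset.mul_sum, Finset.sum_div]
        _ ≤ ∑ m ∈ Finset.range M, ∑ k ∈ Finset.Ico (2 ^ m) (2 ^ (m + 1)),
              (16 / Real.log 2 ^ 2) *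
                ((∫ ω, (X (k + 1) ω) ^ 2) * (Real.log (k + 1 : ℕ)) ^ 2 / ((k + 1 : ℕ) : ℝ) ^ 2) := by
            refine Finset.sum_le_sum fun m _ => Finset.sum_le_sum fun k hk => ?_
            obtain ⟨hk1, hk2⟩ := Finset.mem_Ico.mp hk
            have h7 := RM_key _ (σnn k) m k hk1 hk2
            push_cast
            exact h7
        _ = (16 / Real.log 2 ^ 2) * ∑ m ∈ Finset.range M, ∑ k ∈ Finset.Ico (2 ^ m) (2 ^ (m + 1)),
              ((∫ ω, (X (k + 1) ω) ^ 2) * (Real.log (k + 1 : ℕ)) ^ 2 / ((k + 1 : ℕ) : ℝ) ^ 2) := by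
            simp_rw [Finset.mul_sum]
        _ = (16 / Real.log 2 ^ 2) * ∑ k ∈ Finset.Ico 1 (2 ^ M),
              ((∫ ω, (X (k + 1) ω) ^ 2) * (Real.log (k + 1 : ℕ)) ^ 2 / ((k + 1 : ℕ) : ℝ) ^ 2) := by
            rw [RM_blocks]
        _ ≤ (16 / Real.log 2 ^ 2) * ∑' k : ℕ,
              (∫ ω, (X (k + 1) ω) ^ 2) * (Real.log (k + 1 : ℕ)) ^ 2 / ((k + 1 : ℕ) : ℝ) ^ 2 := by
            refine mul_le_mul_of_nonneg_left ?_ (by positivity)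
            exact Summable.sum_le_tsum _ (fun k _ => hknn k) hsum1
  have hae := RM_ae_summable (fun m ω => RMW (fun k => X (k + 1) ω) m)
    (fun m ω => RMW_nonneg _ _) hWint htW
  filter_upwards [hae] with ω hω
  set f : ℕ → ℝ := fun k => X (k + 1) ω with hfdef
  have hu : Tendsto (fun m => Real.sqrt (RMW f m)) atTop (𝓝 0) := by
    have h0 : Tendsto (fun m => RMW f m) atTop (𝓝 0) := hω.tendsto_atTop_zero
    have h1 := (Real.continuous_sqrt.tendsto 0).comp h0
    simpa [Real.sqrt_zero, Function.comp_def] using h1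
  have hS1 : Tendsto (fun m : ℕ => |f 0| / 2 ^ m) atTop (𝓝 0) :=
    Tendsto.div_atTop tendsto_const_nhds (tendsto_pow_atTop_atTop_of_one_lt one_lt_two)
  have hB : Tendsto (fun m : ℕ =>
      (|f 0| + ∑ l ∈ Finset.range (m + 1), 2 ^ l * Real.sqrt (RMW f l)) / 2 ^ m)
      atTop (𝓝 0) := by
    have h2 := hS1.add (RM_cesaro (fun l => Real.sqrt (RMW f l))
      (fun l => Real.sqrt_nonneg _) hu)
    simpa [add_div] using h2
  have hlog : Tendsto (fun n : ℕ => Nat.log 2 n) atTop atTop := by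
    apply tendsto_atTop_atTop.mpr
    intro b
    refine ⟨2 ^ b, fun n hn => ?_⟩
    have hb0 := Nat.two_pow_pos b
    exact (Nat.le_log_iff_pow_le one_lt_two (by omega)).mpr hn
  apply squeeze_zero_norm' ?_ (hB.comp hlog)
  filter_upwards [eventually_ge_atTop 1] with n hn
  simp only [Function.comp]
  set m := Nat.log 2 n with hm
  have hm1 : 2 ^ m ≤ n := Nat.pow_log_le_self 2 (by omega)
  have hm2 : n < 2 ^ (m + 1) := Nat.lt_pow_succ_log_self one_lt_two n
  have hIcc : ∑ k ∈ Finset.Icc 1 n, X k ω = ∑ k ∈ Finset.range n, f k := by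
    rw [← Finset.Ico_add_one_right_eq_Icc, Finset.sum_Ico_eq_sum_range]
    have hlen : n + 1 - 1 = n := by omega
    rw [hlen]
    exact Finset.sum_congr rfl fun i _ => by rw [hfdef]; simp [Nat.add_comm 1 i]
  have hΔ : ∀ l : ℕ, |∑ k ∈ Finset.Ico (2 ^ l) (2 ^ (l + 1)), f k|
      ≤ 2 ^ l * Real.sqrt (RMW f l) := fun l =>
    RM_block_bound f l (2 ^ (l + 1)) (Nat.pow_le_pow_right (by norm_num) (Nat.le_succ l)) le_rfl
  have hD : |∑ k ∈ Finset.Ico (2 ^ m) n, f k| ≤ 2 ^ m * Real.sqrt (RMW f m) :=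
    RM_block_bound f m n hm1 hm2.le
  have h9 : ∀ l : ℕ, ∑ k ∈ Finset.Ico (2 ^ l) (2 ^ (l + 1)), f k
      = (∑ k ∈ Finset.range (2 ^ (l + 1)), f k) - ∑ k ∈ Finset.range (2 ^ l), f k := by
    intro l
    rw [Finset.range_eq_Ico, Finset.range_eq_Ico, eq_sub_iff_add_eq, add_comm]
    exact Finset.sum_Ico_consecutive f (Nat.zero_le _)
      (Nat.pow_le_pow_right (by norm_num) (Nat.le_succ l))
  have htel : ∑ k ∈ Finset.range (2 ^ m), f k
      = f 0 + ∑ l ∈ Finset.range m, ∑ k ∈ Finset.Ico (2 ^ l) (2 ^ (l + 1)), f k := by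
    have h10 := Finset.sum_range_sub (fun l => ∑ k ∈ Finset.range (2 ^ l), f k) m
    calc ∑ k ∈ Finset.range (2 ^ m), f k
        = f 0 + ((∑ k ∈ Finset.range (2 ^ m), f k) - ∑ k ∈ Finset.range (2 ^ 0), f k) := by
          rw [pow_zero, Finset.sum_range_one]; ring
      _ = f 0 + ∑ l ∈ Finset.range m,
            ((∑ k ∈ Finset.range (2 ^ (l + 1)), f k) - ∑ k ∈ Finset.range (2 ^ l), f k) := by
          rw [h10]
      _ = f 0 + ∑ l ∈ Finset.range m, ∑ k ∈ Finset.Ico (2 ^ l) (2 ^ (l + 1)), f k := by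
          rw [Finset.sum_congr rfl (fun l _ => (h9 l).symm)]
  have hsplitn : ∑ k ∈ Finset.range n, f k
      = (∑ k ∈ Finset.range (2 ^ m), f k) + ∑ k ∈ Finset.Ico (2 ^ m) n, f k := by
    rw [Finset.range_eq_Ico, Finset.range_eq_Ico]
    exact (Finset.sum_Ico_consecutive f (Nat.zero_le _) hm1).symm
  have hnum : |∑ k ∈ Finset.range n, f k|
      ≤ |f 0| + ∑ l ∈ Finset.range (m + 1), 2 ^ l * Real.sqrt (RMW f l) := by
    rw [hsplitn, htel, Finset.sum_range_succ]
    have t1 : |f 0 + (∑ l ∈ Finset.range m, ∑ k ∈ Finset.Ico (2 ^ l) (2 ^ (l + 1)), f k)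
        + ∑ k ∈ Finset.Ico (2 ^ m) n, f k|
        ≤ |f 0| + |∑ l ∈ Finset.range m, ∑ k ∈ Finset.Ico (2 ^ l) (2 ^ (l + 1)), f k|
          + |∑ k ∈ Finset.Ico (2 ^ m) n, f k| :=
      le_trans (abs_add_le _ _) (by gcongr; exact abs_add_le _ _)
    have t2 : |∑ l ∈ Finset.range m, ∑ k ∈ Finset.Ico (2 ^ l) (2 ^ (l + 1)), f k|
        ≤ ∑ l ∈ Finset.range m, 2 ^ l * Real.sqrt (RMW f l) :=
      le_trans (Finset.abs_sum_le_sum_abs _ _) (Finset.sum_le_sum fun l _ => hΔ l)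
    calc |f 0 + (∑ l ∈ Finset.range m, ∑ k ∈ Finset.Ico (2 ^ l) (2 ^ (l + 1)), f k)
        + ∑ k ∈ Finset.Ico (2 ^ m) n, f k| ≤ _ := t1
      _ ≤ |f 0| + (∑ l ∈ Finset.range m, 2 ^ l * Real.sqrt (RMW f l))
          + 2 ^ m * Real.sqrt (RMW f m) := by linarith [hD]
      _ = _ := by ring
  have hpos2 : (0:ℝ) < 2 ^ m := by positivity
  have hposn : (0:ℝ) < (n:ℝ) := by exact_mod_cast (by omega : 0 < n)
  calc ‖(n : ℝ)⁻¹ * ∑ k ∈ Finset.Icc 1 n, X k ω‖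
      = |∑ k ∈ Finset.range n, f k| * ((n:ℝ))⁻¹ := by
        rw [Real.norm_eq_abs, hIcc, abs_mul, abs_inv, Nat.abs_cast, mul_comm]
    _ ≤ (|f 0| + ∑ l ∈ Finset.range (m + 1), 2 ^ l * Real.sqrt (RMW f l)) * ((2:ℝ) ^ m)⁻¹ := by
        refine mul_le_mul hnum ?_ (inv_nonneg.mpr hposn.le) (by positivity)
        refine inv_anti₀ hpos2 ?_
        exact_mod_cast hm1
    _ = (|f 0| + ∑ l ∈ Finset.range (m + 1), 2 ^ l * Real.sqrt (RMW f l)) / 2 ^ m := by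
        rw [div_eq_mul_inv]
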